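/- For primes p and positive integers n, the proportion of entries in the first p^n rows of Pascal's triangle not divisible by p tends to 0 as n → ∞ when p ≥ 2; precisely, (p(p+1)/2)^n divided by the total number of entries p^n(p^n+1)/2 tends to 0. -/

import Mathlib

open Filter in
/-- The proportion of entries in the first `p^n` rows of Pascal's triangle that are
not divisible by the prime `p` tends to `0`: `(p(p+1)/2)^n / (p^n(p^n+1)/2) → 0`. -/
theorem proportion_tendsto_zero (p : ℕ) (hp : p.Prime) :
    Tendsto (fun n : ℕ =>
        (((p : ℝ) * (p + 1) / 2) ^ n) / ((p : ℝ) ^ n * ((p : ℝ) ^ n + 1) / 2))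
      atTop (nhds 0) := by
  have hp2 : (2 : ℝ) ≤ (p : ℝ) := by exact_mod_cast hp.two_le
  have hp0 : (0 : ℝ) < (p : ℝ) := by linarith
  have hr0 : (0 : ℝ) ≤ ((p : ℝ) + 1) / (2 * p) := by positivity
  have hr1 : ((p : ℝ) + 1) / (2 * p) < 1 := by
    rw [div_lt_one (by positivity)]; linarith
  have hlim : Tendsto (fun n : ℕ => 2 * (((p : ℝ) + 1) / (2 * p)) ^ n) atTop (nhds 0) := by
    have := (tendsto_pow_atTop_nhds_zero_of_lt_one hr0 hr1).const_mul (2 : ℝ)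
    simpa using this
  apply squeeze_zero (g := fun n : ℕ => 2 * (((p : ℝ) + 1) / (2 * p)) ^ n) _ _ hlim
  · intro n; positivity
  · intro n
    have hpn : (0 : ℝ) < (p : ℝ) ^ n := by positivity
    have hden : (p : ℝ) ^ n * (p : ℝ) ^ n / 2 ≤ (p : ℝ) ^ n * ((p : ℝ) ^ n + 1) / 2 := by
      nlinarith
    calc (((p : ℝ) * (p + 1) / 2) ^ n) / ((p : ℝ) ^ n * ((p : ℝ) ^ n + 1) / 2)
        ≤ (((p : ℝ) * (p + 1) / 2) ^ n) / ((p : ℝ) ^ n * (p : ℝ) ^ n / 2) := by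
          apply div_le_div_of_nonneg_left _ (by positivity) hden
          positivity
      _ = 2 * (((p : ℝ) + 1) / (2 * p)) ^ n := by
          rw [div_pow, mul_pow, div_pow, mul_pow]
          field_simp
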